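/- For all integers m, n, r ≥ 0 and every integer k, in ℤ[q]: S_q^{(r)}(m+n,k) = Σ_{i=0}^{n} Σ_{j=0}^{m} q^{i(j+r)} · ([j+r]_q)^{n-i} · C(n,i) · S_q^{(r)}(m,j) · S_q(i,k-j), where C(n,i) is the ordinary binomial coefficient. -/
import Mathlib


open Finset Polynomial

/-- The q-integer [n]_q = 1 + q + ⋯ + q^{n-1} in ℤ[q]. -/
noncomputable def qint (n : ℕ) : Polynomial ℤ := ∑ i ∈ range n, X ^ i

/-- q-Stirling numbers of the second kind (natural-number index version). -/
noncomputable def qStirling2Nat : ℕ → ℕ → Polynomial ℤ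
  | 0, 0 => 1
  | 0, _ + 1 => 0
  | _ + 1, 0 => 0
  | n + 1, k + 1 => X ^ k * qStirling2Nat n k + qint (k + 1) * qStirling2Nat n (k + 1)

/-- q-Stirling numbers of the second kind, vanishing for negative second index. -/
noncomputable def qStirling2 (n : ℕ) (k : ℤ) : Polynomial ℤ :=
  if 0 ≤ k then qStirling2Nat n k.toNat else 0

/-- q-r-Stirling numbers of the second kind. -/
noncomputable def qrStirling2 (r n : ℕ) (k : ℤ) : Polynomial ℤ :=
  ∑ i ∈ range (n + 1), X ^ (i * r) * (qint r) ^ (n - i) * (n.choose i : Polynomial ℤ) *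
    qStirling2 i k

lemma qint_zero : qint 0 = 0 := rfl

lemma qint_add (a b : ℕ) : qint (a + b) = qint a + X ^ a * qint b := by
  unfold qint
  rw [Finset.sum_range_add, Finset.mul_sum]
  simp [pow_add]

lemma qS2_neg {n : ℕ} {k : ℤ} (h : k < 0) : qStirling2 n k = 0 := by
  simp [qStirling2, not_le.mpr h]

lemma qS2_rec (n : ℕ) (k : ℤ) :
    qStirling2 (n + 1) k =
      X ^ (k - 1).toNat * qStirling2 n (k - 1) + qint k.toNat * qStirling2 n k := by
  rcases lt_or_ge k 0 with h | h
  · rw [qS2_neg h, qS2_neg (by omega), show k.toNat = 0 by omega, qint_zero]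
    ring
  · lift k to ℕ using h
    cases k with
    | zero =>
      simp only [Nat.cast_zero]
      rw [qS2_neg (by norm_num : (0:ℤ) - 1 < 0), show ((0:ℤ)).toNat = 0 from rfl, qint_zero]
      rw [qStirling2, if_pos le_rfl]
      show qStirling2Nat (n+1) 0 = _
      rw [qStirling2Nat]
      ring
    | succ c =>
      push_cast
      rw [qStirling2, if_pos (by omega), qStirling2, if_pos (by omega),
        qStirling2, if_pos (by omega)]
      have h1 : ((c:ℤ) + 1).toNat = c + 1 := by omega
      have h2 : ((c:ℤ) + 1 - 1).toNat = c := by omega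
      rw [h1, h2, qStirling2Nat]

lemma qr_key (r n i : ℕ) (hi : i ≤ n) (k : ℤ) :
    X ^ ((i+1)*r) * qint r ^ (n-i) * ((n.choose i : ℕ) : Polynomial ℤ) * qStirling2 (i+1) k
      + X ^ (i*r) * qint r ^ (n+1-i) * ((n.choose i : ℕ) : Polynomial ℤ) * qStirling2 i k
    = X ^ (k + r - 1).toNat *
        (X ^ (i*r) * qint r ^ (n-i) * ((n.choose i : ℕ) : Polynomial ℤ) * qStirling2 i (k-1))
      + qint (k + r).toNat *
        (X ^ (i*r) * qint r ^ (n-i) * ((n.choose i : ℕ) : Polynomial ℤ) * qStirling2 i k) := by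
  rw [qS2_rec, show n + 1 - i = (n - i) + 1 by omega, pow_succ, add_one_mul, pow_add]
  rcases lt_or_ge k 0 with h | h
  · rw [qS2_neg h, qS2_neg (by omega), show k.toNat = 0 by omega, qint_zero]
    ring
  · rw [show (k + r).toNat = r + k.toNat by omega, qint_add]
    rcases eq_or_lt_of_le h with h0 | h0
    · rw [qS2_neg (show k - 1 < 0 by omega)]
      rw [show k.toNat = 0 by omega, qint_zero]
      ring
    · rw [show (k + r - 1).toNat = r + (k - 1).toNat by omega, pow_add]
      ring

lemma qr_rec (r n : ℕ) (k : ℤ) :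
    qrStirling2 r (n+1) k =
      X ^ (k + r - 1).toNat * qrStirling2 r n (k - 1) +
        qint (k + r).toNat * qrStirling2 r n k := by
  have e4 : (∑ i ∈ range (n+1), X ^ ((i+1)*r) * qint r ^ (n-i) *
        ((n.choose (i+1) : ℕ) : Polynomial ℤ) * qStirling2 (i+1) k)
      + qint r ^ (n+1) * qStirling2 0 k =
      ∑ i ∈ range (n+1), X ^ (i*r) * qint r ^ (n+1-i) * ((n.choose i : ℕ) : Polynomial ℤ) *
        qStirling2 i k := by
    have h1 := Finset.sum_range_succ'
      (fun i => X ^ (i*r) * qint r ^ (n+1-i) * ((n.choose i : ℕ) : Polynomial ℤ) * qStirling2 i k) (n+1)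
    have h2 := Finset.sum_range_succ
      (fun i => X ^ (i*r) * qint r ^ (n+1-i) * ((n.choose i : ℕ) : Polynomial ℤ) * qStirling2 i k) (n+1)
    simp only [Nat.succ_sub_succ, Nat.choose_succ_self, Nat.cast_zero, mul_zero, zero_mul,
      add_zero, Nat.choose_zero_right, Nat.cast_one, mul_one, one_mul, pow_zero,
      Nat.zero_mul, Nat.sub_zero] at h1 h2
    rw [h2] at h1
    linear_combination -h1
  calc qrStirling2 r (n+1) k
      = (∑ i ∈ range (n+1), X ^ ((i+1)*r) * qint r ^ (n-i) *
          (((n+1).choose (i+1) : ℕ) : Polynomial ℤ) * qStirling2 (i+1) k)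
        + qint r ^ (n+1) * qStirling2 0 k := by
        rw [qrStirling2, Finset.sum_range_succ']
        simp [Nat.succ_sub_succ]
    _ = (∑ i ∈ range (n+1),
          (X ^ ((i+1)*r) * qint r ^ (n-i) * ((n.choose i : ℕ) : Polynomial ℤ) * qStirling2 (i+1) k
           + X ^ ((i+1)*r) * qint r ^ (n-i) * ((n.choose (i+1) : ℕ) : Polynomial ℤ) * qStirling2 (i+1) k))
        + qint r ^ (n+1) * qStirling2 0 k := by
        congr 1
        refine Finset.sum_congr rfl fun i hi => ?_
        rw [Nat.choose_succ_succ]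
        push_cast
        ring
    _ = (∑ i ∈ range (n+1),
          (X ^ ((i+1)*r) * qint r ^ (n-i) * ((n.choose i : ℕ) : Polynomial ℤ) * qStirling2 (i+1) k
           + X ^ (i*r) * qint r ^ (n+1-i) * ((n.choose i : ℕ) : Polynomial ℤ) * qStirling2 i k)) := by
        rw [Finset.sum_add_distrib, Finset.sum_add_distrib, add_assoc, e4]
    _ = ∑ i ∈ range (n+1),
          (X ^ (k + r - 1).toNat *
            (X ^ (i*r) * qint r ^ (n-i) * ((n.choose i : ℕ) : Polynomial ℤ) * qStirling2 i (k-1))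
          + qint (k + r).toNat *
            (X ^ (i*r) * qint r ^ (n-i) * ((n.choose i : ℕ) : Polynomial ℤ) * qStirling2 i k)) := by
        refine Finset.sum_congr rfl fun i hi => ?_
        exact qr_key r n i (by simpa using Nat.lt_succ_iff.mp (Finset.mem_range.mp hi)) k
    _ = _ := by
        rw [Finset.sum_add_distrib, ← Finset.mul_sum, ← Finset.mul_sum, qrStirling2, qrStirling2]
lemma qS2Nat_eq_zero : ∀ n k : ℕ, n < k → qStirling2Nat n k = 0 := by
  intro n
  induction n with
  | zero => intro k h; match k, h with
    | k + 1, _ => rfl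
  | succ n ih =>
    intro k h
    match k, h with
    | k + 1, h =>
      rw [qStirling2Nat, ih k (by omega), ih (k+1) (by omega)]
      ring

lemma qS2_eq_zero {n : ℕ} {k : ℤ} (h : (n : ℤ) < k) : qStirling2 n k = 0 := by
  rw [qStirling2, if_pos (by omega), qS2Nat_eq_zero n k.toNat (by omega)]

lemma qr_neg {r n : ℕ} {k : ℤ} (h : k < 0) : qrStirling2 r n k = 0 := by
  rw [qrStirling2]
  exact Finset.sum_eq_zero fun i _ => by rw [qS2_neg h, mul_zero]

lemma qr_big {r n : ℕ} {k : ℤ} (h : (n : ℤ) < k) : qrStirling2 r n k = 0 := by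
  rw [qrStirling2]
  refine Finset.sum_eq_zero fun i hi => ?_
  have : (i : ℤ) < k := by
    have := Finset.mem_range.mp hi; omega
  rw [qS2_eq_zero this, mul_zero]

lemma qS2_zero_left (k : ℤ) : qStirling2 0 k = if k = 0 then 1 else 0 := by
  rcases lt_trichotomy k 0 with h | h | h
  · rw [qS2_neg h, if_neg (by omega)]
  · subst h
    rw [if_pos rfl, qStirling2, if_pos le_rfl]
    rfl
  · rw [qS2_eq_zero (by exact_mod_cast h), if_neg (by omega)]

lemma qr_zero_left (s : ℕ) (c : ℤ) : qrStirling2 s 0 c = qStirling2 0 c := by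
  simp [qrStirling2]

lemma qr_conv (m r : ℕ) : ∀ (n : ℕ) (k : ℤ), qrStirling2 r (m + n) k =
    ∑ j ∈ range (m + 1), qrStirling2 r m (j : ℤ) * qrStirling2 (j + r) n (k - j) := by
  intro n
  induction n with
  | zero =>
    intro k
    rw [Nat.add_zero]
    have hz : ∀ j ∈ range (m+1), qrStirling2 r m (j : ℤ) * qrStirling2 (j + r) 0 (k - j)
        = if (j : ℤ) = k then qrStirling2 r m (j : ℤ) else 0 := by
      intro j _
      rw [qr_zero_left, qS2_zero_left]
      by_cases h : (j : ℤ) = k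
      · rw [if_pos h, if_pos (by omega), mul_one]
      · rw [if_neg h, if_neg (by omega), mul_zero]
    rw [Finset.sum_congr rfl hz]
    by_cases hk : 0 ≤ k ∧ k ≤ (m : ℤ)
    · rw [Finset.sum_eq_single k.toNat]
      · rw [if_pos (by omega), show ((k.toNat : ℕ) : ℤ) = k by omega]
      · intro j _ hj
        rw [if_neg (by omega)]
      · intro hmem
        exact absurd (Finset.mem_range.mpr (by omega)) hmem
    · rw [Finset.sum_eq_zero, ]
      · rcases (not_and_or.mp hk) with h | h
        · rw [qr_neg (by omega)]
        · rw [qr_big (by omega)]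
      · intro j hj
        have := Finset.mem_range.mp hj
        rw [if_neg (by omega)]
  | succ n ih =>
    intro k
    rw [show m + (n+1) = (m+n)+1 from rfl, qr_rec, ih, ih]
    have hterm : ∀ j ∈ range (m+1),
        qrStirling2 r m (j : ℤ) * qrStirling2 (j + r) (n+1) (k - j)
        = X ^ (k + r - 1).toNat * (qrStirling2 r m (j : ℤ) * qrStirling2 (j + r) n (k - 1 - j))
          + qint (k + r).toNat * (qrStirling2 r m (j : ℤ) * qrStirling2 (j + r) n (k - j)) := by
      intro j _
      rw [qr_rec]
      have e1 : (k - (j:ℤ) + ((j:ℕ) + r : ℕ)) = k + r := by push_cast; ring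
      have e2 : k - (j:ℤ) - 1 = k - 1 - j := by ring
      rw [e1, e2]
      ring
    rw [Finset.sum_congr rfl hterm, Finset.sum_add_distrib, ← Finset.mul_sum, ← Finset.mul_sum]

theorem qrStirling2_add (m n r : ℕ) (k : ℤ) :
    qrStirling2 r (m + n) k =
      ∑ i ∈ range (n + 1), ∑ j ∈ range (m + 1),
        X ^ (i * (j + r)) * (qint (j + r)) ^ (n - i) * (n.choose i : Polynomial ℤ) *
          qrStirling2 r m (j : ℤ) * qStirling2 i (k - j) := by
  rw [qr_conv m r n k, Finset.sum_comm]
  refine Finset.sum_congr rfl fun j _ => ?_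
  have hdef : qrStirling2 (j + r) n (k - j) = ∑ i ∈ range (n + 1),
      X ^ (i * (j + r)) * qint (j + r) ^ (n - i) * (n.choose i : Polynomial ℤ) *
        qStirling2 i (k - j) := rfl
  rw [hdef, Finset.mul_sum]
  refine Finset.sum_congr rfl fun i _ => ?_
  ring
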